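/- Fix λ > 0 and γ > 1, and define the SCAD penalty g on [0,∞) by g(θ) = λθ if θ ≤ λ; g(θ) = (−θ² + 2γλθ − λ²)/(2(γ−1)) if λ < θ ≤ γλ; g(θ) = λ²(γ+1)/2 if θ > γλ. Define w(θ) = λ if θ ≤ λ; w(θ) = (γλ − θ)/(γ−1) if λ < θ ≤ γλ; w(θ) = 0 if θ > γλ. Then g is continuous, monotonically increasing, and concave on [0,∞), and for every θ ≥ 0, w(θ) is a supergradient of g at θ relative to [0,∞). -/

import Mathlib

set_option maxHeartbeats 800000


/-- SCAD penalty: continuity, monotonicity, concavity on `[0, ∞)` and its supergradient. -/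
theorem scad_penalty
    (lam γ : ℝ) (hlam : 0 < lam) (hγ : 1 < γ)
    (g w : ℝ → ℝ)
    (hg : ∀ θ : ℝ, g θ =
      if θ ≤ lam then lam * θ
      else if θ ≤ γ * lam then (-θ ^ 2 + 2 * γ * lam * θ - lam ^ 2) / (2 * (γ - 1))
      else lam ^ 2 * (γ + 1) / 2)
    (hw : ∀ θ : ℝ, w θ =
      if θ ≤ lam then lam
      else if θ ≤ γ * lam then (γ * lam - θ) / (γ - 1)
      else 0) :
    ContinuousOn g (Set.Ici (0 : ℝ)) ∧
    MonotoneOn g (Set.Ici (0 : ℝ)) ∧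
    ConcaveOn ℝ (Set.Ici (0 : ℝ)) g ∧
    ∀ θ : ℝ, 0 ≤ θ → ∀ y : ℝ, 0 ≤ y → g θ + w θ * (y - θ) ≥ g y := by
  have hb : (0:ℝ) < γ - 1 := by linarith
  have hb' : (γ - 1 : ℝ) ≠ 0 := ne_of_gt hb
  have h2 : (0:ℝ) < 2 * (γ - 1) := by linarith
  have hlg : lam ≤ γ * lam := by nlinarith
  -- supergradient
  have sg : ∀ θ : ℝ, 0 ≤ θ → ∀ y : ℝ, 0 ≤ y → g θ + w θ * (y - θ) ≥ g y := by
    intro θ hθ y hy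
    rw [hg θ, hg y, hw θ]
    have ecomb : (-θ ^ 2 + 2 * γ * lam * θ - lam ^ 2) / (2 * (γ - 1)) +
        (γ * lam - θ) / (γ - 1) * (y - θ) =
        (-θ ^ 2 + 2 * γ * lam * θ - lam ^ 2 + 2 * (γ * lam - θ) * (y - θ)) / (2 * (γ - 1)) := by
      field_simp
    split_ifs with h1 h3 h4 h5 h6 h7 h8 h9 h10 <;> (try push_neg at *)
    · linarith
    · rw [ge_iff_le, div_le_iff₀ h2]; nlinarith [sq_nonneg (y - lam)]
    · nlinarith [mul_pos hlam hlam, mul_le_mul_of_nonneg_left h4.le hlam.le]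
    · rw [ecomb, ge_iff_le, ← sub_nonneg,
        show (-θ ^ 2 + 2 * γ * lam * θ - lam ^ 2 + 2 * (γ * lam - θ) * (y - θ)) / (2 * (γ - 1))
          - lam * y
          = ((θ - lam) ^ 2 + 2 * (θ - lam) * (lam - y)) / (2 * (γ - 1)) by field_simp; ring]
      apply div_nonneg _ h2.le
      nlinarith [sq_nonneg (θ - lam), mul_nonneg (by linarith : (0:ℝ) ≤ θ - lam)
        (by linarith : (0:ℝ) ≤ lam - y)]
    · rw [ecomb, ge_iff_le, div_le_div_iff₀ h2 h2]
      nlinarith [mul_nonneg h2.le (sq_nonneg (θ - y))]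
    · rw [ecomb, ge_iff_le, le_div_iff₀ h2]
      nlinarith [sq_nonneg (θ - γ * lam),
        mul_nonneg (by linarith : (0:ℝ) ≤ γ * lam - θ) (by linarith : (0:ℝ) ≤ y - γ * lam)]
    · nlinarith [mul_pos hlam hlam, mul_le_mul_of_nonneg_left h8 hlam.le]
    · rw [ge_iff_le, div_le_iff₀ h2]
      nlinarith [sq_nonneg (y - γ * lam)]
    · linarith
  -- w is nonnegative
  have hw0 : ∀ θ : ℝ, 0 ≤ w θ := by
    intro θ
    rw [hw θ]
    split_ifs with h1 h3
    · exact hlam.le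
    · push_neg at h1
      apply div_nonneg (by linarith) hb.le
    · exact le_refl 0
  -- continuity
  have gcont : Continuous g := by
    have gfun : g = fun θ => if θ ≤ lam then lam * θ
      else if θ ≤ γ * lam then (-θ ^ 2 + 2 * γ * lam * θ - lam ^ 2) / (2 * (γ - 1))
      else lam ^ 2 * (γ + 1) / 2 := funext hg
    rw [gfun]
    apply Continuous.if_le
    · exact continuous_const.mul continuous_id
    · apply Continuous.if_le
      · exact Continuous.div_const (by fun_prop) _
      · exact continuous_const
      · exact continuous_id
      · exact continuous_const
      · intro x hx
        rw [hx]
        field_simp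
        ring
    · exact continuous_id
    · exact continuous_const
    · intro x hx
      rw [hx, if_pos hlg]
      field_simp
      ring
  refine ⟨gcont.continuousOn, ?_, ?_, sg⟩
  · intro x hx y hy hxy
    have h := sg y hy x hx
    have hwy := hw0 y
    nlinarith [mul_nonneg hwy (by linarith : (0:ℝ) ≤ y - x)]
  · refine ⟨convex_Ici 0, ?_⟩
    intro x hx y hy a b ha hbn hab
    simp only [smul_eq_mul]
    have hx0 : (0:ℝ) ≤ x := hx
    have hy0 : (0:ℝ) ≤ y := hy
    have hz : (0:ℝ) ≤ a * x + b * y := by positivity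
    have h1 := sg (a * x + b * y) hz x hx0
    have h2' := sg (a * x + b * y) hz y hy0
    have hb1 : b = 1 - a := by linarith
    subst hb1
    have t1 := mul_le_mul_of_nonneg_left h1.le ha
    have t2 := mul_le_mul_of_nonneg_left h2'.le hbn
    nlinarith [t1, t2]
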